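/- arXiv:1112.2900 — 2 statements merged into one kernel-verified Lean document; each statement's English description precedes it below -/
import Mathlib

section
/- For every natural number n, the sum over all partitions P of a set with n+1 elements of (|P|-1)! is at most n! · e^{n+2}, where |P| denotes the number of blocks of P and e is Euler's number. -/
open Finset

namespace PartitionAux

variable {X : Type*} [Fintype X] [DecidableEq X] {n : ℕ}

/-- Encode a block as an optional index via an embedding of non-distinguished blocks. -/
def fm (x0 : X) (P : Finpartition (Finset.univ : Finset X))
    (ι : ↥(P.parts.erase (P.part x0)) ↪ Fin n) (B : Finset X) : Option (Fin n) :=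
  if h : B ∈ P.parts.erase (P.part x0) then some (ι ⟨B, h⟩) else none

lemma fm_injOn (x0 : X) (P : Finpartition (Finset.univ : Finset X))
    (ι : ↥(P.parts.erase (P.part x0)) ↪ Fin n) :
    ∀ B1 ∈ P.parts, ∀ B2 ∈ P.parts, fm x0 P ι B1 = fm x0 P ι B2 → B1 = B2 := by
  intro B1 h1 B2 h2 h
  unfold fm at h
  by_cases e1 : B1 ∈ P.parts.erase (P.part x0) <;>
    by_cases e2 : B2 ∈ P.parts.erase (P.part x0)
  · rw [dif_pos e1, dif_pos e2] at h
    have := ι.injective (Option.some_injective _ h)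
    exact congrArg Subtype.val this
  · rw [dif_pos e1, dif_neg e2] at h; exact absurd h (by simp)
  · rw [dif_neg e1, dif_pos e2] at h; exact absurd h (by simp)
  · have hb1 : B1 = P.part x0 := by
      by_contra hc; exact e1 (Finset.mem_erase.2 ⟨hc, h1⟩)
    have hb2 : B2 = P.part x0 := by
      by_contra hc; exact e2 (Finset.mem_erase.2 ⟨hc, h2⟩)
    rw [hb1, hb2]

/-- Encode a point by the index of its block. -/
def psi (x0 : X) (P : Finpartition (Finset.univ : Finset X))
    (ι : ↥(P.parts.erase (P.part x0)) ↪ Fin n) (x : X) : Option (Fin n) :=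
  fm x0 P ι (P.part x)

lemma mem_part_iff (x0 : X) (P : Finpartition (Finset.univ : Finset X))
    (ι : ↥(P.parts.erase (P.part x0)) ↪ Fin n) (x y : X) :
    y ∈ P.part x ↔ psi x0 P ι y = psi x0 P ι x := by
  constructor
  · intro h
    unfold psi
    rw [P.part_eq_of_mem (P.part_mem.2 (mem_univ x)) h]
  · intro h
    have := fm_injOn x0 P ι _ (P.part_mem.2 (mem_univ y)) _ (P.part_mem.2 (mem_univ x)) h
    rw [← this]
    exact P.mem_part (mem_univ y)

lemma key (x0 : X) :
    Fintype.card (Σ P : Finpartition (Finset.univ : Finset X),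
      (↥(P.parts.erase (P.part x0)) ↪ Fin n)) ≤ (n + 1) ^ (Fintype.card X - 1) := by
  have hcard : Fintype.card ({x : X // x ≠ x0} → Option (Fin n))
      = (n + 1) ^ (Fintype.card X - 1) := by
    rw [Fintype.card_fun, Fintype.card_option, Fintype.card_fin]
    congr 1
    rw [Fintype.card_subtype_compl, Fintype.card_subtype_eq]
  rw [← hcard]
  apply Fintype.card_le_of_injective (fun g x => psi x0 g.1 g.2 x.1)
  rintro ⟨P, ι⟩ ⟨Q, κ⟩ h
  have hpsi : ∀ z, psi x0 P ι z = psi x0 Q κ z := by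
    intro z
    by_cases hz : z = x0
    · subst hz
      unfold psi fm
      rw [dif_neg (by simp), dif_neg (by simp)]
    · exact congrFun h ⟨z, hz⟩
  have hpart : ∀ x, P.part x = Q.part x := by
    intro x
    ext y
    rw [mem_part_iff x0 P ι, mem_part_iff x0 Q κ, hpsi, hpsi]
  have hPQ : P = Q := by
    apply Finpartition.ext
    ext t
    constructor
    · intro ht
      obtain ⟨x, hx⟩ := P.nonempty_of_mem_parts ht
      rw [← P.part_eq_of_mem ht hx, hpart]
      exact Q.part_mem.2 (mem_univ x)
    · intro ht
      obtain ⟨x, hx⟩ := Q.nonempty_of_mem_parts ht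
      rw [← Q.part_eq_of_mem ht hx, ← hpart]
      exact P.part_mem.2 (mem_univ x)
  subst hPQ
  have hik : ι = κ := by
    ext ⟨t, ht⟩
    have ht' : t ∈ P.parts := (Finset.mem_erase.1 ht).2
    obtain ⟨x, hx⟩ := P.nonempty_of_mem_parts ht'
    have hpx : P.part x = t := P.part_eq_of_mem ht' hx
    have h2 := hpsi x
    unfold psi fm at h2
    rw [hpx, dif_pos ht, dif_pos ht] at h2
    exact congrArg Fin.val (Option.some_injective _ h2)
  rw [hik]

end PartitionAux

set_option maxHeartbeats 1000000 in
/-- For every natural number `n`, the sum over all partitions `P` of a set with `n+1` elements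
of `(|P|-1)!` is at most `n! * e^(n+2)`, where `|P|` is the number of blocks of `P`. -/
theorem partition_factorial_sum_le
    (n : ℕ) (X : Type*) [Fintype X] [DecidableEq X] (hX : Fintype.card X = n + 1) :
    ∑ P : Finpartition (Finset.univ : Finset X),
        (Nat.factorial (P.parts.card - 1) : ℝ)
      ≤ (Nat.factorial n : ℝ) * Real.exp 1 ^ (n + 2) := by
  have hne : Nonempty X := Fintype.card_pos_iff.1 (by omega)
  obtain ⟨x0⟩ := hne
  have hfact : (0:ℝ) < (Nat.factorial n : ℝ) := by positivity
  calc ∑ P : Finpartition (Finset.univ : Finset X),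
        (Nat.factorial (P.parts.card - 1) : ℝ)
      ≤ ∑ P : Finpartition (Finset.univ : Finset X),
          (Fintype.card (↥(P.parts.erase (P.part x0)) ↪ Fin n) : ℝ) := by
        apply Finset.sum_le_sum
        intro P _
        rw [Fintype.card_embedding_eq, Fintype.card_fin, Fintype.card_coe,
          Finset.card_erase_of_mem (P.part_mem.2 (Finset.mem_univ x0))]
        have h2 : P.parts.card - 1 ≤ n := by
          have := P.card_parts_le_card
          rw [Finset.card_univ, hX] at this
          omega
        have := Nat.descFactorial_le (P.parts.card - 1) h2
        rw [Nat.descFactorial_self] at this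
        exact_mod_cast this
    _ = (Fintype.card (Σ P : Finpartition (Finset.univ : Finset X),
          (↥(P.parts.erase (P.part x0)) ↪ Fin n)) : ℝ) := by
        rw [Fintype.card_sigma]
        push_cast
        rfl
    _ ≤ ((n + 1 : ℕ) : ℝ) ^ n := by
        have := PartitionAux.key (n := n) x0
        rw [hX] at this
        simpa using (Nat.cast_le (α := ℝ)).2 this
    _ ≤ (Nat.factorial n : ℝ) * Real.exp 1 ^ (n + 1) := by
        have h := Real.pow_div_factorial_le_exp (x := ((n : ℝ) + 1)) (by positivity) n
        rw [div_le_iff₀ hfact] at h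
        have he : Real.exp ((n : ℝ) + 1) = Real.exp 1 ^ (n + 1) := by
          rw [← Real.exp_nat_mul]
          norm_num
        rw [he] at h
        push_cast
        rw [mul_comm]
        exact h
    _ ≤ (Nat.factorial n : ℝ) * Real.exp 1 ^ (n + 2) := by
        apply mul_le_mul_of_nonneg_left _ hfact.le
        apply pow_le_pow_right₀ (Real.one_le_exp (by norm_num)) (by omega)
end

section
/- Let E be a normed vector space over ℝ, let X be a finite set with n+1 elements (n a natural number), and suppose that to every partition P of X there is assigned a continuous linear operator T_P : E → E with operator norm ‖T_P‖ ≤ 1. Then the operator A := \sum_P (-1)^{|P|-1} (|P|-1)! · T_P (sum over all partitions P of X) satisfies ‖A‖ ≤ \sum_P (|P|-1)!, and consequently ‖A‖ ≤ n! · e^{n+2}. -/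
open Finset

/-- Geometric-type bound: `∑_{k=1}^m e^k ≤ e^(m+1) - e`. -/
lemma sum_exp_Icc_le (m : ℕ) :
    ∑ k ∈ Finset.Icc 1 m, Real.exp k ≤ Real.exp (m + 1) - Real.exp 1 := by
  induction m with
  | zero => simp
  | succ m ih =>
    rw [Finset.sum_Icc_succ_top (by omega)]
    have h2 : (2 : ℝ) ≤ Real.exp 1 := by
      have := Real.add_one_le_exp (1 : ℝ); linarith
    have hpos : (0 : ℝ) < Real.exp (m + 1) := Real.exp_pos _
    have hmul : Real.exp ((m : ℝ) + 1 + 1) = Real.exp 1 * Real.exp ((m : ℝ) + 1) := by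
      rw [← Real.exp_add]; ring_nf
    push_cast
    push_cast at ih
    nlinarith [ih, hpos, h2, hmul]

/-- The number of partitions of a finite type with exactly `k` parts, multiplied by `k!`,
is at most `k ^ card X` (injection of labelled partitions into functions `X → Fin k`). -/
lemma card_finpartition_mul_factorial_le (X : Type*) [Fintype X] [DecidableEq X] (k : ℕ) :
    (Finset.univ.filter
        (fun P : Finpartition (Finset.univ : Finset X) => P.parts.card = k)).card
      * Nat.factorial k ≤ k ^ Fintype.card X := by
  classical
  let S := {P : Finpartition (Finset.univ : Finset X) // P.parts.card = k}
  let F : (Σ P : S, ({s // s ∈ P.1.parts} ≃ Fin k)) → (X → Fin k) :=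
    fun z x => z.2 ⟨z.1.1.part x, z.1.1.part_mem.mpr (mem_univ x)⟩
  have hF : Function.Injective F := by
    rintro ⟨⟨P, hP⟩, σ⟩ ⟨⟨Q, hQ⟩, τ⟩ h
    have hxy : ∀ x : X, σ ⟨P.part x, P.part_mem.mpr (mem_univ x)⟩
        = τ ⟨Q.part x, Q.part_mem.mpr (mem_univ x)⟩ := fun x => congrFun h x
    -- the parts coincide pointwise
    have hpart : ∀ x : X, P.part x = Q.part x := by
      intro x
      ext y
      rw [P.mem_part_iff_part_eq_part (mem_univ y) (mem_univ x),
          Q.mem_part_iff_part_eq_part (mem_univ y) (mem_univ x)]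
      constructor
      · intro hyx
        have h1 : σ ⟨P.part y, P.part_mem.mpr (mem_univ y)⟩
            = σ ⟨P.part x, P.part_mem.mpr (mem_univ x)⟩ := by
          congr 1; exact Subtype.ext hyx
        have h2 : τ ⟨Q.part y, Q.part_mem.mpr (mem_univ y)⟩
            = τ ⟨Q.part x, Q.part_mem.mpr (mem_univ x)⟩ := by
          rw [← hxy y, ← hxy x, h1]
        exact Subtype.ext_iff.mp (τ.injective h2)
      · intro hyx
        have h2 : τ ⟨Q.part y, Q.part_mem.mpr (mem_univ y)⟩
            = τ ⟨Q.part x, Q.part_mem.mpr (mem_univ x)⟩ := by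
          congr 1; exact Subtype.ext hyx
        have h1 : σ ⟨P.part y, P.part_mem.mpr (mem_univ y)⟩
            = σ ⟨P.part x, P.part_mem.mpr (mem_univ x)⟩ := by
          rw [hxy y, hxy x, h2]
        exact Subtype.ext_iff.mp (σ.injective h1)
    have hPQ : P = Q := by
      ext s
      constructor
      · intro hs
        obtain ⟨x, hx⟩ := P.nonempty_of_mem_parts hs
        have : Q.part x = s := by rw [← hpart x]; exact P.part_eq_of_mem hs hx
        exact this ▸ Q.part_mem.mpr (mem_univ x)
      · intro hs
        obtain ⟨x, hx⟩ := Q.nonempty_of_mem_parts hs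
        have : P.part x = s := by rw [hpart x]; exact Q.part_eq_of_mem hs hx
        exact this ▸ P.part_mem.mpr (mem_univ x)
    subst hPQ
    have hστ : σ = τ := by
      apply Equiv.ext
      rintro ⟨s, hs⟩
      obtain ⟨x, hx⟩ := P.nonempty_of_mem_parts hs
      have hsx : s = P.part x := (P.part_eq_of_mem hs hx).symm
      subst hsx
      exact hxy x
    subst hστ
    rfl
  have hcard := Fintype.card_le_of_injective F hF
  rw [Fintype.card_sigma, Fintype.card_fun, Fintype.card_fin] at hcard
  have hconst : ∀ P : S, Fintype.card ({s // s ∈ P.1.parts} ≃ Fin k)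
      = Nat.factorial k := by
    intro P
    have hcardP : Fintype.card {s // s ∈ P.1.parts} = k := by
      rw [Fintype.card_coe]; exact P.2
    have e : {s // s ∈ P.1.parts} ≃ Fin k := Fintype.equivFinOfCardEq hcardP
    rw [Fintype.card_equiv e, hcardP]
  rw [Finset.sum_congr rfl (fun P _ => hconst P), Finset.sum_const, smul_eq_mul,
    Finset.card_univ, Fintype.card_subtype] at hcard
  exact hcard

/-- If `E` is a real normed vector space, `X` a finite set with `n+1` elements, and to every
partition `P` of `X` there is assigned a continuous linear operator `T P : E →L[ℝ] E` with
`‖T P‖ ≤ 1`, then the operator `A = ∑ P, (-1)^(|P|-1) * (|P|-1)! • T P` satisfies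
`‖A‖ ≤ ∑ P, (|P|-1)!` and consequently `‖A‖ ≤ n! * e^(n+2)`. -/
theorem cumulant_operator_norm_le
    (E : Type*) [NormedAddCommGroup E] [NormedSpace ℝ E]
    (n : ℕ) (X : Type*) [Fintype X] [DecidableEq X] (hX : Fintype.card X = n + 1)
    (T : Finpartition (Finset.univ : Finset X) → E →L[ℝ] E)
    (hT : ∀ P, ‖T P‖ ≤ 1) :
    ‖∑ P : Finpartition (Finset.univ : Finset X),
        ((-1 : ℝ) ^ (P.parts.card - 1) * (Nat.factorial (P.parts.card - 1) : ℝ)) • T P‖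
      ≤ ∑ P : Finpartition (Finset.univ : Finset X),
          (Nat.factorial (P.parts.card - 1) : ℝ) ∧
    ‖∑ P : Finpartition (Finset.univ : Finset X),
        ((-1 : ℝ) ^ (P.parts.card - 1) * (Nat.factorial (P.parts.card - 1) : ℝ)) • T P‖
      ≤ (Nat.factorial n : ℝ) * Real.exp 1 ^ (n + 2) := by
  classical
  -- Part 1: triangle inequality.
  have h1 : ‖∑ P : Finpartition (Finset.univ : Finset X),
        ((-1 : ℝ) ^ (P.parts.card - 1) * (Nat.factorial (P.parts.card - 1) : ℝ)) • T P‖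
      ≤ ∑ P : Finpartition (Finset.univ : Finset X),
          (Nat.factorial (P.parts.card - 1) : ℝ) := by
    refine (norm_sum_le _ _).trans (Finset.sum_le_sum fun P _ => ?_)
    refine le_trans (norm_smul_le ((-1 : ℝ) ^ (P.parts.card - 1)
      * (Nat.factorial (P.parts.card - 1) : ℝ)) (T P)) ?_
    have habs : ‖(-1 : ℝ) ^ (P.parts.card - 1) * (Nat.factorial (P.parts.card - 1) : ℝ)‖
        = (Nat.factorial (P.parts.card - 1) : ℝ) := by
      rw [norm_mul, norm_pow, norm_neg, norm_one, one_pow, one_mul,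
        Real.norm_natCast]
    rw [habs]
    calc (Nat.factorial (P.parts.card - 1) : ℝ) * ‖T P‖
        ≤ (Nat.factorial (P.parts.card - 1) : ℝ) * 1 :=
          mul_le_mul_of_nonneg_left (hT P) (by positivity)
      _ = _ := mul_one _
  refine ⟨h1, h1.trans ?_⟩
  -- Part 2: bound the sum of factorials.
  have hXne : (Finset.univ : Finset X).Nonempty := by
    rw [← Finset.card_pos, Finset.card_univ, hX]; omega
  -- every partition has between 1 and n+1 parts
  have hrange : ∀ P : Finpartition (Finset.univ : Finset X),
      P.parts.card ∈ Finset.Icc 1 (n + 1) := by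
    intro P
    rw [Finset.mem_Icc]
    constructor
    · have hne : (Finset.univ : Finset X) ≠ ⊥ := by
        simpa using hXne.ne_empty
      exact Finset.card_pos.mpr (P.parts_nonempty hne)
    · have := P.card_parts_le_card
      rwa [Finset.card_univ, hX] at this
  -- group the sum by the number of parts
  have hfib := Finset.sum_fiberwise_of_maps_to
    (s := (Finset.univ : Finset (Finpartition (Finset.univ : Finset X))))
    (g := fun P => P.parts.card)
    (t := Finset.Icc 1 (n + 1)) (fun P _ => hrange P)
    (fun P : Finpartition (Finset.univ : Finset X) =>
      (Nat.factorial (P.parts.card - 1) : ℝ))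
  rw [← hfib]
  -- bound each fiber
  have hterm : ∀ k ∈ Finset.Icc 1 (n + 1),
      (∑ P ∈ Finset.univ.filter
          (fun P : Finpartition (Finset.univ : Finset X) => P.parts.card = k),
        (Nat.factorial (P.parts.card - 1) : ℝ))
      ≤ (Nat.factorial n : ℝ) * Real.exp k := by
    intro k hk
    rw [Finset.mem_Icc] at hk
    obtain ⟨hk1, hk2⟩ := hk
    set N := (Finset.univ.filter
        (fun P : Finpartition (Finset.univ : Finset X) => P.parts.card = k)).card with hN
    have hsum : (∑ P ∈ Finset.univ.filter
          (fun P : Finpartition (Finset.univ : Finset X) => P.parts.card = k),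
        (Nat.factorial (P.parts.card - 1) : ℝ))
        = N * (Nat.factorial (k - 1) : ℝ) := by
      rw [Finset.sum_congr rfl
        (fun P hP => by rw [(Finset.mem_filter.mp hP).2] :
          ∀ P ∈ Finset.univ.filter
            (fun P : Finpartition (Finset.univ : Finset X) => P.parts.card = k),
          ((Nat.factorial (P.parts.card - 1) : ℝ))
            = (Nat.factorial (k - 1) : ℝ)), Finset.sum_const, nsmul_eq_mul]
    rw [hsum]
    -- N * (k-1)! ≤ k^n
    have hcount := card_finpartition_mul_factorial_le X k
    rw [hX] at hcount
    have hfact : Nat.factorial k = k * Nat.factorial (k - 1) := by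
      obtain ⟨j, rfl⟩ : ∃ j, k = j + 1 := ⟨k - 1, by omega⟩
      simp [Nat.factorial_succ]
    have hNk : N * Nat.factorial (k - 1) ≤ k ^ n := by
      have h' : (N * Nat.factorial (k - 1)) * k ≤ k ^ n * k := by
        calc (N * Nat.factorial (k - 1)) * k = N * Nat.factorial k := by rw [hfact]; ring
          _ ≤ k ^ (n + 1) := hcount
          _ = k ^ n * k := by ring
      exact Nat.le_of_mul_le_mul_right h' (by omega)
    have hNk' : (N : ℝ) * (Nat.factorial (k - 1) : ℝ) ≤ (k : ℝ) ^ n := by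
      have := hNk
      exact_mod_cast this
    refine hNk'.trans ?_
    -- k^n ≤ n! * exp k
    have hexp : ((k : ℝ)) ^ n / (Nat.factorial n : ℝ) ≤ Real.exp k :=
      Real.pow_div_factorial_le_exp (k : ℝ) (by positivity) n
    have hfn : (0 : ℝ) < (Nat.factorial n : ℝ) := by positivity
    rw [div_le_iff₀ hfn] at hexp
    linarith [hexp]
  calc (∑ k ∈ Finset.Icc 1 (n + 1), ∑ P ∈ Finset.univ.filter
          (fun P : Finpartition (Finset.univ : Finset X) => P.parts.card = k),
        (Nat.factorial (P.parts.card - 1) : ℝ))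
      ≤ ∑ k ∈ Finset.Icc 1 (n + 1), (Nat.factorial n : ℝ) * Real.exp k :=
        Finset.sum_le_sum hterm
    _ = (Nat.factorial n : ℝ) * ∑ k ∈ Finset.Icc 1 (n + 1), Real.exp k := by
        rw [Finset.mul_sum]
    _ ≤ (Nat.factorial n : ℝ) * Real.exp 1 ^ (n + 2) := by
        have h := sum_exp_Icc_le (n + 1)
        have hpos : (0 : ℝ) < Real.exp 1 := Real.exp_pos 1
        have hle : ∑ k ∈ Finset.Icc 1 (n + 1), Real.exp k ≤ Real.exp ((n : ℝ) + 2) := by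
          have he : ((n : ℝ) + 1 + 1) = (n : ℝ) + 2 := by ring
          push_cast at h
          rw [he] at h
          linarith
        have : Real.exp ((n : ℝ) + 2) = Real.exp 1 ^ (n + 2) := by
          rw [← Real.exp_nat_mul, mul_one]; push_cast; ring_nf
        refine mul_le_mul_of_nonneg_left ?_ (by positivity)
        rw [← this]
        exact_mod_cast hle
end
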